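/- For every real u with |u| ≤ 1 and t ≥ 0, E[u^D] = exp(−t Σ_{j₀=1}^{k₀} μ_{j₀} (1 − exp(−j₀ Σ_{j=1}^k λ_j Σ_{i=1}^∞ α_i^{*(j)} (1 − u^i)))). -/

import Mathlib

open MeasureTheory ProbabilityTheory

/-- GCP state probabilities: `p(n,t) = ∑_{Ω(k,n)} ∏_j ((λ_j t)^{x_j}/x_j!) e^{−λ_j t}`,
where index `j : Fin k` encodes jump size `j+1`. -/
noncomputable def gcpPmf (k : ℕ) (lam : Fin k → ℝ) (n : ℕ) (t : ℝ) : ℝ :=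
  ∑' x : Fin k → ℕ,
    if (∑ j : Fin k, ((j : ℕ) + 1) * x j) = n then
      ∏ j : Fin k, (lam j * t) ^ (x j) / (Nat.factorial (x j)) * Real.exp (-(lam j * t))
    else 0

/-- IGCP state probabilities: `p̂(n,t) = ∑_{s=0}^∞ p(n,s) p₀(s,t)`. -/
noncomputable def igcpPmf (k : ℕ) (lam : Fin k → ℝ) (k0 : ℕ) (mu : Fin k0 → ℝ)
    (n : ℕ) (t : ℝ) : ℝ :=
  ∑' s : ℕ, gcpPmf k lam n s * gcpPmf k0 mu s t

/-- The `j`-fold convolution of a pmf `a` on ℕ: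
`a_i^{*(j)} = ∑_{r₁+⋯+r_j = i} a_{r₁} a_{r₂} ⋯ a_{r_j}`. -/
noncomputable def pmfConv (a : ℕ → ℝ) (j : ℕ) (i : ℕ) : ℝ :=
  ∑' r : Fin j → ℕ, if (∑ m : Fin j, r m) = i then ∏ m : Fin j, a (r m) else 0

lemma tsum_pi_prod : ∀ (K : ℕ) (f : Fin K → ℕ → ℝ), (∀ j, Summable fun n => |f j n|) →
    Summable (fun x : Fin K → ℕ => ∏ j, f j (x j)) ∧
    (∑' x : Fin K → ℕ, ∏ j, f j (x j)) = ∏ j, ∑' n, f j n := by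
  intro K
  induction K with
  | zero =>
    intro f _
    refine ⟨(hasSum_fintype _).summable, ?_⟩
    simp [tsum_fintype]
  | succ K ih =>
    intro f hf
    have ihabs := ih (fun j n => |f j.succ n|) (fun j => by simpa [abs_abs] using hf j.succ)
    have ihf := ih (fun j => f j.succ) (fun j => hf j.succ)
    set g : ℕ → ℝ := f 0 with hgdef
    set h : (Fin K → ℕ) → ℝ := fun y => ∏ j, f j.succ (y j) with hhdef
    have hg : Summable fun n => ‖g n‖ := by simpa [Real.norm_eq_abs] using hf 0
    have hh : Summable fun y => ‖h y‖ := by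
      refine ihabs.1.congr fun y => ?_
      simp [hhdef, Real.norm_eq_abs, Finset.abs_prod]
    have key : ∀ p : ℕ × (Fin K → ℕ),
        (∏ j, f j ((Fin.consEquiv fun _ => ℕ) p j)) = g p.1 * h p.2 := by
      intro p
      rw [Fin.prod_univ_succ]
      simp [Fin.consEquiv, hhdef, hgdef]
    constructor
    · refine ((Fin.consEquiv fun _ => ℕ).summable_iff).1 ?_
      exact (summable_mul_of_summable_norm hg hh).congr fun p => (key p).symm
    · rw [← Equiv.tsum_eq (Fin.consEquiv fun _ => ℕ) (fun x => ∏ j, f j (x j))]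
      rw [tsum_congr key, ← tsum_mul_tsum_of_summable_norm hg hh]
      rw [Fin.prod_univ_succ, ihf.2]

lemma tsum_fiber {α : Type*} (N : α → ℕ) (h : α → ℝ) (hhsum : Summable h) :
    Summable (fun n : ℕ => ∑' x : α, if N x = n then h x else 0) ∧
    (∑' n : ℕ, ∑' x : α, if N x = n then h x else 0) = ∑' x, h x := by
  classical
  have he : Summable fun σ : Σ n : ℕ, {x : α // N x = n} => h ((Equiv.sigmaFiberEquiv N) σ) :=
    (Equiv.sigmaFiberEquiv N).summable_iff.2 hhsum
  have hinner : ∀ n, (∑' x : {x : α // N x = n}, h x.1)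
      = ∑' x : α, if N x = n then h x else 0 := by
    intro n
    exact (tsum_subtype {x : α | N x = n} h).trans
      (tsum_congr fun x => by simp [Set.indicator_apply])
  constructor
  · exact he.sigma.congr fun n => hinner n
  · refine Eq.trans ?_ (Equiv.tsum_eq (Equiv.sigmaFiberEquiv N) h)
    refine Eq.trans ?_ (Summable.tsum_sigma' (fun n => he.sigma_factor n) he).symm
    exact tsum_congr fun n => (hinner n).symm

lemma key_pgf (K : ℕ) (c : Fin K → ℕ) (w : Fin K → ℕ → ℝ)
    (hw : ∀ j, Summable fun n => |w j n|) (v : ℝ) (hv : |v| ≤ 1) :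
    Summable (fun n : ℕ =>
      (∑' x : Fin K → ℕ, if (∑ j, c j * x j) = n then ∏ j, w j (x j) else 0) * v ^ n) ∧
    (∑' n : ℕ,
      (∑' x : Fin K → ℕ, if (∑ j, c j * x j) = n then ∏ j, w j (x j) else 0) * v ^ n)
      = ∏ j, ∑' m, w j m * v ^ (c j * m) := by
  classical
  have hwv : ∀ j, Summable fun n => |w j n * v ^ (c j * n)| := by
    intro j
    refine Summable.of_nonneg_of_le (fun n => abs_nonneg _) (fun n => ?_) (hw j)
    rw [abs_mul]
    have h1 : |v ^ (c j * n)| ≤ 1 := by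
      rw [abs_pow]; exact pow_le_one₀ (abs_nonneg v) hv
    calc |w j n| * |v ^ (c j * n)| ≤ |w j n| * 1 :=
          mul_le_mul_of_nonneg_left h1 (abs_nonneg _)
      _ = |w j n| := mul_one _
  have hprod := tsum_pi_prod K (fun j n => w j n * v ^ (c j * n)) hwv
  have habs := tsum_pi_prod K (fun j n => |w j n * v ^ (c j * n)|)
      (fun j => by simpa [abs_abs] using hwv j)
  have hhsum : Summable fun x : Fin K → ℕ => ∏ j, w j (x j) * v ^ (c j * x j) :=
    (habs.1.congr fun x => (Finset.abs_prod _ _).symm).of_abs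
  have hterm : ∀ n, (∑' x : Fin K → ℕ, if (∑ j, c j * x j) = n then ∏ j, w j (x j) else 0) * v ^ n
      = ∑' x : Fin K → ℕ, if (∑ j, c j * x j) = n then ∏ j, w j (x j) * v ^ (c j * x j) else 0 := by
    intro n
    rw [← tsum_mul_right]
    refine tsum_congr fun x => ?_
    by_cases hx : (∑ j, c j * x j) = n
    · rw [if_pos hx, if_pos hx, ← hx, Finset.prod_mul_distrib, Finset.prod_pow_eq_pow_sum]
    · rw [if_neg hx, if_neg hx, zero_mul]
  have hfib := tsum_fiber (fun x : Fin K → ℕ => ∑ j, c j * x j)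
      (fun x => ∏ j, w j (x j) * v ^ (c j * x j)) hhsum
  constructor
  · exact hfib.1.congr fun n => (hterm n).symm
  · rw [tsum_congr hterm, hfib.2, hprod.2]

lemma real_exp_tsum (z : ℝ) : (∑' m : ℕ, z ^ m / m.factorial) = Real.exp z := by
  rw [Real.exp_eq_exp_ℝ, NormedSpace.exp_eq_tsum_div]

lemma gcpPmf_nonneg {k : ℕ} {lam : Fin k → ℝ} (hlam : ∀ j, 0 < lam j) (n : ℕ) {t : ℝ}
    (ht : 0 ≤ t) : 0 ≤ gcpPmf k lam n t := by
  refine tsum_nonneg fun x => ?_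
  by_cases h : (∑ j : Fin k, ((j : ℕ) + 1) * x j) = n
  · rw [if_pos h]
    refine Finset.prod_nonneg fun j _ => mul_nonneg (div_nonneg (pow_nonneg ?_ _) (by positivity))
      (Real.exp_nonneg _)
    exact mul_nonneg (hlam j).le ht
  · rw [if_neg h]

lemma gcp_pgf {k : ℕ} {lam : Fin k → ℝ} (hlam : ∀ j, 0 < lam j) {s : ℝ} (hs : 0 ≤ s)
    {v : ℝ} (hv : |v| ≤ 1) :
    Summable (fun n : ℕ => gcpPmf k lam n s * v ^ n) ∧
    (∑' n : ℕ, gcpPmf k lam n s * v ^ n)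
      = Real.exp (s * ∑ j : Fin k, lam j * (v ^ ((j : ℕ) + 1) - 1)) := by
  have hw : ∀ j : Fin k,
      Summable fun m => |(lam j * s) ^ m / m.factorial * Real.exp (-(lam j * s))| :=
    fun j => ((Real.summable_pow_div_factorial (lam j * s)).mul_right _).abs
  have hkey := key_pgf k (fun j => (j : ℕ) + 1)
      (fun j m => (lam j * s) ^ m / m.factorial * Real.exp (-(lam j * s))) hw v hv
  have hpmf : ∀ n, gcpPmf k lam n s
      = ∑' x : Fin k → ℕ, if (∑ j : Fin k, ((j : ℕ) + 1) * x j) = n then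
          ∏ j : Fin k, (lam j * s) ^ (x j) / (x j).factorial * Real.exp (-(lam j * s)) else 0 :=
    fun n => rfl
  have hfac : ∀ j : Fin k,
      (∑' m : ℕ, (lam j * s) ^ m / m.factorial * Real.exp (-(lam j * s)) * v ^ (((j : ℕ) + 1) * m))
        = Real.exp (lam j * s * v ^ ((j : ℕ) + 1) - lam j * s) := by
    intro j
    have hterm : ∀ m : ℕ,
        (lam j * s) ^ m / m.factorial * Real.exp (-(lam j * s)) * v ^ (((j : ℕ) + 1) * m)
          = (lam j * s * v ^ ((j : ℕ) + 1)) ^ m / m.factorial * Real.exp (-(lam j * s)) := by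
      intro m
      rw [pow_mul, mul_pow]
      ring
    rw [tsum_congr hterm, tsum_mul_right, real_exp_tsum, ← Real.exp_add]
    ring_nf
  constructor
  · exact hkey.1.congr fun n => by rw [← hpmf n]
  · calc (∑' n : ℕ, gcpPmf k lam n s * v ^ n)
        = ∑' n : ℕ, (∑' x : Fin k → ℕ, if (∑ j : Fin k, ((j : ℕ) + 1) * x j) = n then
            ∏ j : Fin k, (lam j * s) ^ (x j) / (x j).factorial * Real.exp (-(lam j * s)) else 0) * v ^ n :=
          tsum_congr fun n => by rw [← hpmf n]
      _ = ∏ j : Fin k, ∑' m : ℕ,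
            (lam j * s) ^ m / m.factorial * Real.exp (-(lam j * s)) * v ^ (((j : ℕ) + 1) * m) :=
          hkey.2
      _ = ∏ j : Fin k, Real.exp (lam j * s * v ^ ((j : ℕ) + 1) - lam j * s) :=
          Finset.prod_congr rfl fun j _ => hfac j
      _ = Real.exp (∑ j : Fin k, (lam j * s * v ^ ((j : ℕ) + 1) - lam j * s)) :=
          (Real.exp_sum _ _).symm
      _ = Real.exp (s * ∑ j : Fin k, lam j * (v ^ ((j : ℕ) + 1) - 1)) := by
          rw [Finset.mul_sum]
          exact congrArg Real.exp (Finset.sum_congr rfl fun j _ => by ring)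

lemma conv_pgf {a : ℕ → ℝ} (ha : Summable fun i => |a i|) (J : ℕ) {v : ℝ} (hv : |v| ≤ 1) :
    Summable (fun i : ℕ => pmfConv a J i * v ^ i) ∧
    (∑' i : ℕ, pmfConv a J i * v ^ i) = (∑' i : ℕ, a i * v ^ i) ^ J := by
  have hkey := key_pgf J (fun _ => 1) (fun _ => a) (fun _ => ha) v hv
  have hpmf : ∀ i, pmfConv a J i
      = ∑' x : Fin J → ℕ, if (∑ m, 1 * x m) = i then ∏ m, a (x m) else 0 := by
    intro i
    exact tsum_congr fun x => by simp only [one_mul]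
  have hfac : (∏ _j : Fin J, ∑' m : ℕ, a m * v ^ (1 * m)) = (∑' i : ℕ, a i * v ^ i) ^ J := by
    simp [one_mul]
  constructor
  · exact hkey.1.congr fun i => by rw [← hpmf i]
  · calc (∑' i : ℕ, pmfConv a J i * v ^ i)
        = ∑' i : ℕ, (∑' x : Fin J → ℕ, if (∑ m, 1 * x m) = i then ∏ m, a (x m) else 0) * v ^ i :=
          tsum_congr fun i => by rw [← hpmf i]
      _ = ∏ _j : Fin J, ∑' m : ℕ, a m * v ^ (1 * m) := hkey.2
      _ = (∑' i : ℕ, a i * v ^ i) ^ J := hfac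

lemma conv_tail {a : ℕ → ℝ} (ha0 : ∀ i, 0 ≤ a i) (ha1 : ∑' i, a i = 1) (J : ℕ)
    {u : ℝ} (hu : |u| ≤ 1) :
    (∑' i : ℕ, pmfConv a J (i + 1) * (1 - u ^ (i + 1)))
      = 1 - (∑' i : ℕ, a i * u ^ i) ^ J := by
  have hSa : Summable a := by
    by_contra hc
    rw [tsum_eq_zero_of_not_summable hc] at ha1
    norm_num at ha1
  have habs : Summable fun i => |a i| := hSa.congr fun i => (abs_of_nonneg (ha0 i)).symm
  have h1 := conv_pgf habs J (v := 1) (by norm_num)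
  have hq : Summable fun i => pmfConv a J i := h1.1.congr fun i => by simp
  have hq1 : (∑' i, pmfConv a J i) = 1 := by
    have := h1.2
    simp only [one_pow, mul_one] at this
    rw [this, ha1, one_pow]
  have hu' := conv_pgf habs J hu
  have hf : Summable fun i => pmfConv a J i * (1 - u ^ i) :=
    (hq.sub hu'.1).congr fun i => by ring
  have hval : (∑' i, pmfConv a J i * (1 - u ^ i)) = 1 - (∑' i : ℕ, a i * u ^ i) ^ J := by
    have := Summable.tsum_sub hq hu'.1
    calc (∑' i, pmfConv a J i * (1 - u ^ i))
        = ∑' i, (pmfConv a J i - pmfConv a J i * u ^ i) := tsum_congr fun i => by ring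
      _ = (∑' i, pmfConv a J i) - ∑' i, pmfConv a J i * u ^ i := Summable.tsum_sub hq hu'.1
      _ = 1 - (∑' i : ℕ, a i * u ^ i) ^ J := by rw [hq1, hu'.2]
  rw [Summable.tsum_eq_zero_add hf] at hval
  simpa using hval

lemma igcp_pgf_abstract (G : ℕ → ℕ → ℝ) (H : ℕ → ℝ) (c : ℝ) {v : ℝ} (hv : |v| ≤ 1)
    (hGnn : ∀ m s, 0 ≤ G m s) (hHnn : ∀ s, 0 ≤ H s)
    (hG1 : ∀ s, (∑' m, G m s) = 1) (hGsumm : ∀ s, Summable fun m => G m s)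
    (hHsumm : Summable H)
    (hGv : ∀ s : ℕ, (∑' m, G m s * v ^ m) = Real.exp ((s : ℝ) * c)) :
    (∑' m : ℕ, (∑' s : ℕ, G m s * H s) * v ^ m) = ∑' s : ℕ, H s * Real.exp c ^ s := by
  have hQnn : 0 ≤ fun p : ℕ × ℕ => G p.2 p.1 * H p.1 :=
    fun p => mul_nonneg (hGnn p.2 p.1) (hHnn p.1)
  have hQ1 : ∀ s : ℕ, Summable fun m => G m s * H s := fun s => (hGsumm s).mul_right _
  have hQ2 : Summable fun s : ℕ => ∑' m, G m s * H s := by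
    refine hHsumm.congr fun s => ?_
    rw [tsum_mul_right, hG1 s, one_mul]
  have hQ : Summable fun p : ℕ × ℕ => G p.2 p.1 * H p.1 :=
    (summable_prod_of_nonneg hQnn).2 ⟨hQ1, hQ2⟩
  have hF : Summable fun p : ℕ × ℕ => G p.2 p.1 * H p.1 * v ^ p.2 := by
    refine Summable.of_abs (Summable.of_nonneg_of_le (fun p => abs_nonneg _) (fun p => ?_) hQ)
    rw [abs_mul, abs_mul, abs_of_nonneg (hGnn p.2 p.1), abs_of_nonneg (hHnn p.1)]
    have h1 : |v ^ p.2| ≤ 1 := by rw [abs_pow]; exact pow_le_one₀ (abs_nonneg v) hv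
    calc G p.2 p.1 * H p.1 * |v ^ p.2|
        ≤ G p.2 p.1 * H p.1 * 1 :=
          mul_le_mul_of_nonneg_left h1 (mul_nonneg (hGnn p.2 p.1) (hHnn p.1))
      _ = _ := mul_one _
  calc (∑' m : ℕ, (∑' s : ℕ, G m s * H s) * v ^ m)
      = ∑' m : ℕ, ∑' s : ℕ, G m s * H s * v ^ m := by
        refine tsum_congr fun m => ?_
        rw [← tsum_mul_right]
    _ = ∑' s : ℕ, ∑' m : ℕ, G m s * H s * v ^ m := by
        exact Summable.tsum_comm' (f := fun (s m : ℕ) => G m s * H s * v ^ m) hF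
          (fun s => hF.prod_factor s) (fun m => hF.prod_symm.prod_factor m)
    _ = ∑' s : ℕ, H s * Real.exp c ^ s := by
        refine tsum_congr fun s => ?_
        have h2 : ∀ m : ℕ, G m s * H s * v ^ m = (G m s * v ^ m) * H s := fun m => by ring
        rw [tsum_congr h2, tsum_mul_right, hGv s, mul_comm, ← Real.exp_nat_mul]

lemma igcp_pgf {k : ℕ} {lam : Fin k → ℝ} (hlam : ∀ j, 0 < lam j)
    {k0 : ℕ} {mu : Fin k0 → ℝ} (hmu : ∀ j0, 0 < mu j0) {t : ℝ} (ht : 0 ≤ t)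
    {v : ℝ} (hv : |v| ≤ 1) :
    (∑' m : ℕ, igcpPmf k lam k0 mu m t * v ^ m)
      = Real.exp (t * ∑ j0 : Fin k0, mu j0 *
          (Real.exp (∑ j : Fin k, lam j * (v ^ ((j : ℕ) + 1) - 1)) ^ ((j0 : ℕ) + 1) - 1)) := by
  set c : ℝ := ∑ j : Fin k, lam j * (v ^ ((j : ℕ) + 1) - 1) with hc
  have hcle : c ≤ 0 := by
    refine Finset.sum_nonpos fun j _ => mul_nonpos_of_nonneg_of_nonpos (hlam j).le ?_
    have : v ^ ((j : ℕ) + 1) ≤ 1 :=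
      (le_abs_self _).trans (by rw [abs_pow]; exact pow_le_one₀ (abs_nonneg v) hv)
    linarith
  have hec : |Real.exp c| ≤ 1 := by
    rw [abs_of_pos (Real.exp_pos c)]
    exact Real.exp_le_one_iff.2 hcle
  have hGnn : ∀ (m s : ℕ), 0 ≤ gcpPmf k lam m (s : ℝ) :=
    fun m s => gcpPmf_nonneg hlam m (Nat.cast_nonneg s)
  have hHnn : ∀ s : ℕ, 0 ≤ gcpPmf k0 mu s t := fun s => gcpPmf_nonneg hmu s ht
  have hG1 : ∀ s : ℕ, (∑' m, gcpPmf k lam m (s : ℝ)) = 1 := by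
    intro s
    have h3 := (gcp_pgf hlam (s := (s : ℝ)) (Nat.cast_nonneg s) (v := 1) (by norm_num)).2
    simp only [one_pow, mul_one, sub_self, mul_zero, Finset.sum_const_zero,
      Real.exp_zero] at h3
    exact h3
  have hGsumm : ∀ s : ℕ, Summable fun m => gcpPmf k lam m (s : ℝ) := by
    intro s
    have h3 := (gcp_pgf hlam (s := (s : ℝ)) (Nat.cast_nonneg s) (v := 1) (by norm_num)).1
    exact h3.congr fun m => by simp
  have hHsumm : Summable fun s : ℕ => gcpPmf k0 mu s t := by
    have h3 := (gcp_pgf hmu ht (v := 1) (by norm_num)).1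
    exact h3.congr fun s => by simp
  have hGv : ∀ s : ℕ, (∑' m, gcpPmf k lam m (s : ℝ) * v ^ m) = Real.exp ((s : ℝ) * c) :=
    fun s => (gcp_pgf hlam (Nat.cast_nonneg s) hv).2
  have habs := igcp_pgf_abstract (fun m s => gcpPmf k lam m (s : ℝ))
      (fun s => gcpPmf k0 mu s t) c hv hGnn hHnn hG1 hGsumm hHsumm hGv
  have hig : ∀ m : ℕ, igcpPmf k lam k0 mu m t = ∑' s : ℕ, gcpPmf k lam m (s : ℝ) * gcpPmf k0 mu s t :=
    fun m => rfl
  rw [tsum_congr fun m => by rw [hig m]]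
  rw [habs, (gcp_pgf hmu ht hec).2]

lemma integrable_of_bounded_one {Ω : Type*} [MeasurableSpace Ω] {P : Measure Ω}
    [IsProbabilityMeasure P] {f : Ω → ℝ} (hf : Measurable f) (hb : ∀ ω, |f ω| ≤ 1) :
    Integrable f P := by
  refine (integrable_const (1 : ℝ)).mono' hf.aestronglyMeasurable ?_
  exact ae_of_all _ fun ω => by simpa [Real.norm_eq_abs] using hb ω

lemma integral_indep_prod {Ω : Type*} [MeasurableSpace Ω] (P : Measure Ω)
    [IsProbabilityMeasure P] {ι : Type*} (Z : ι → Ω → ℝ)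
    (hZ : iIndepFun Z P)
    (hmeas : ∀ i, Measurable (Z i)) (hbd : ∀ i ω, |Z i ω| ≤ 1) (s : Finset ι) :
    ∫ ω, ∏ i ∈ s, Z i ω ∂P = ∏ i ∈ s, ∫ ω, Z i ω ∂P := by
  classical
  induction s using Finset.induction_on with
  | empty => simp
  | insert i s0 hi ih =>
    have hprodmeas : Measurable fun ω => ∏ j ∈ s0, Z j ω :=
      Finset.measurable_prod s0 fun j _ => hmeas j
    have hprodbd : ∀ ω, |∏ j ∈ s0, Z j ω| ≤ 1 := by
      intro ω
      rw [Finset.abs_prod]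
      exact Finset.prod_le_one (fun j _ => abs_nonneg _) fun j _ => hbd j ω
    have hIndep : IndepFun (Z i) (fun ω => ∏ j ∈ s0, Z j ω) P := by
      have h := (hZ.indepFun_finsetProd_of_notMem hmeas hi).symm
      have heq : (∏ j ∈ s0, Z j) = fun ω => ∏ j ∈ s0, Z j ω := by
        funext ω; exact Finset.prod_apply ω s0 Z
      rwa [heq] at h
    calc ∫ ω, ∏ j ∈ insert i s0, Z j ω ∂P
        = ∫ ω, Z i ω * ∏ j ∈ s0, Z j ω ∂P := by
          refine integral_congr_ae (ae_of_all _ fun ω => ?_)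
          simp only [Finset.prod_insert hi]
      _ = (∫ ω, Z i ω ∂P) * ∫ ω, ∏ j ∈ s0, Z j ω ∂P :=
          hIndep.integral_fun_mul_eq_mul_integral (integrable_of_bounded_one (hmeas i) (hbd i)).1
            (integrable_of_bounded_one hprodmeas hprodbd).1
      _ = ∏ j ∈ insert i s0, ∫ ω, Z j ω ∂P := by rw [ih, Finset.prod_insert hi]

lemma integral_pow_X {Ω : Type*} [MeasurableSpace Ω] (P : Measure Ω) [IsProbabilityMeasure P]
    (Y : Ω → ℕ) (hY : Measurable Y) (a : ℕ → ℝ) (ha0 : ∀ i, 0 ≤ a i)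
    (hdist : ∀ i, P {ω | Y ω = i} = ENNReal.ofReal (a i)) (u : ℝ) (hu : |u| ≤ 1) :
    ∫ ω, u ^ Y ω ∂P = ∑' i, a i * u ^ i := by
  have hpowb : ∀ v : ℕ, |u ^ v| ≤ 1 := fun v => by
    rw [abs_pow]; exact pow_le_one₀ (abs_nonneg u) hu
  have hmap : ∫ ω, u ^ Y ω ∂P = ∫ v, u ^ v ∂(P.map Y) :=
    (integral_map hY.aemeasurable (measurable_of_countable _).aestronglyMeasurable).symm
  have : IsProbabilityMeasure (P.map Y) := Measure.isProbabilityMeasure_map hY.aemeasurable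
  rw [hmap, integral_countable' (integrable_of_bounded_one (measurable_of_countable _) hpowb)]
  refine tsum_congr fun i => ?_
  have h1 : (P.map Y) {i} = ENNReal.ofReal (a i) := by
    rw [Measure.map_apply hY (measurableSet_singleton i)]
    exact hdist i
  rw [measureReal_def, h1, ENNReal.toReal_ofReal (ha0 i), smul_eq_mul]

noncomputable def phiAux (m : ℕ) (u : ℝ) : Option ℕ → ℕ → ℝ :=
  fun o => o.elim (fun v => if v = m then (1:ℝ) else 0) (fun _ v => u ^ v)

lemma integral_F {Ω : Type*} [MeasurableSpace Ω] (P : Measure Ω) [IsProbabilityMeasure P]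
    (X : ℕ → Ω → ℕ) (Mhat : Ω → ℕ)
    (hXmeas : ∀ n, Measurable (X n)) (hMmeas : Measurable Mhat)
    (hindep : iIndepFun
      (fun o : Option ℕ => o.elim Mhat X) P)
    (a : ℕ → ℝ) (ha0 : ∀ i, 0 ≤ a i)
    (hXdist : ∀ n : ℕ, ∀ i : ℕ, P {ω | X n ω = i} = ENNReal.ofReal (a i))
    (u : ℝ) (hu : |u| ≤ 1) (m : ℕ) :
    ∫ ω, Set.indicator {ω' | Mhat ω' = m} (fun ω' => u ^ (∑ n ∈ Finset.range m, X n ω')) ω ∂P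
      = (P {ω | Mhat ω = m}).toReal * (∑' i, a i * u ^ i) ^ m := by
  classical
  have hA : MeasurableSet {ω | Mhat ω = m} := hMmeas (measurableSet_singleton m)
  have hpow1 : ∀ j : ℕ, |u ^ j| ≤ 1 := fun j => by
    rw [abs_pow]; exact pow_le_one₀ (abs_nonneg u) hu
  have hφmeas : ∀ o, Measurable (phiAux m u o) := fun o => measurable_of_countable _
  have hbase : ∀ o : Option ℕ, Measurable (o.elim Mhat X) := by
    intro o; cases o with
    | none => exact hMmeas
    | some n => exact hXmeas n
  have hZindep : iIndepFun
      (fun o : Option ℕ => phiAux m u o ∘ (o.elim Mhat X)) P := hindep.comp (phiAux m u) hφmeas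
  have hZmeas : ∀ o : Option ℕ, Measurable (phiAux m u o ∘ (o.elim Mhat X)) :=
    fun o => (hφmeas o).comp (hbase o)
  have hZbd : ∀ (o : Option ℕ) ω, |(phiAux m u o ∘ (o.elim Mhat X)) ω| ≤ 1 := by
    intro o ω; cases o with
    | none =>
      simp only [phiAux, Function.comp_apply, Option.elim]
      split <;> norm_num
    | some n => exact hpow1 _
  have hnotmem : (none : Option ℕ) ∉ (Finset.range m).image some := by simp
  have hsome : ∀ n : ℕ, ∀ ω, (phiAux m u (some n) ∘ ((some n).elim Mhat X)) ω = u ^ X n ω :=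
    fun n ω => rfl
  have hnone : ∀ ω, (phiAux m u none ∘ ((none : Option ℕ).elim Mhat X)) ω
      = if Mhat ω = m then (1:ℝ) else 0 := fun ω => rfl
  have hprodZ : ∀ ω, Set.indicator {ω' | Mhat ω' = m}
      (fun ω' => u ^ (∑ n ∈ Finset.range m, X n ω')) ω
      = ∏ o ∈ insert none ((Finset.range m).image some),
          (phiAux m u o ∘ (o.elim Mhat X)) ω := by
    intro ω
    rw [Finset.prod_insert hnotmem,
      Finset.prod_image (fun x _ y _ h => Option.some_injective ℕ h)]
    by_cases hω : Mhat ω = m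
    · rw [hnone ω, if_pos hω, one_mul, Set.indicator_of_mem (show ω ∈ {ω' | Mhat ω' = m} from hω)]
      rw [← Finset.prod_pow_eq_pow_sum]
      exact Finset.prod_congr rfl fun n _ => (hsome n ω).symm
    · rw [hnone ω, if_neg hω, zero_mul, Set.indicator_of_notMem (show ω ∉ {ω' | Mhat ω' = m} from hω)]
  calc ∫ ω, Set.indicator {ω' | Mhat ω' = m}
        (fun ω' => u ^ (∑ n ∈ Finset.range m, X n ω')) ω ∂P
      = ∫ ω, ∏ o ∈ insert none ((Finset.range m).image some),
          (phiAux m u o ∘ (o.elim Mhat X)) ω ∂P := integral_congr_ae (ae_of_all _ hprodZ)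
    _ = ∏ o ∈ insert none ((Finset.range m).image some),
          ∫ ω, (phiAux m u o ∘ (o.elim Mhat X)) ω ∂P :=
        integral_indep_prod P _ hZindep hZmeas hZbd _
    _ = (P {ω | Mhat ω = m}).toReal * (∑' i, a i * u ^ i) ^ m := by
        rw [Finset.prod_insert hnotmem,
          Finset.prod_image (fun x _ y _ h => Option.some_injective ℕ h)]
        have h2 : ∫ ω, (phiAux m u none ∘ ((none : Option ℕ).elim Mhat X)) ω ∂P
            = (P {ω | Mhat ω = m}).toReal := by
          have heq : (phiAux m u none ∘ ((none : Option ℕ).elim Mhat X))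
              = Set.indicator {ω | Mhat ω = m} (fun _ => (1:ℝ)) := by
            funext ω
            rw [hnone ω, Set.indicator_apply]
            simp [Set.mem_setOf_eq]
          rw [heq, integral_indicator_const (1:ℝ) hA, smul_eq_mul, mul_one, measureReal_def]
        have h3 : ∀ n : ℕ, ∫ ω, (phiAux m u (some n) ∘ ((some n).elim Mhat X)) ω ∂P
            = ∑' i, a i * u ^ i := by
          intro n
          have : (fun ω => (phiAux m u (some n) ∘ ((some n).elim Mhat X)) ω)
              = fun ω => u ^ X n ω := funext fun ω => hsome n ω
          rw [this]
          exact integral_pow_X P (X n) (hXmeas n) a ha0 (hXdist n) u hu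
        rw [h2, Finset.prod_congr rfl fun n _ => h3 n, Finset.prod_const, Finset.card_range]

/-- the probability generating function of the compound IGCP
`D = ∑_{n=1}^{M̂} X_n`, where the `X_n` are i.i.d. with pmf `a` and `M̂` is distributed
as the IGCP at time `t`, independent of `(X_n)`. -/
theorem compound_igcp_pgf {Ω : Type*} [MeasurableSpace Ω] (P : Measure Ω)
    [IsProbabilityMeasure P]
    (k : ℕ) (hk : 0 < k) (lam : Fin k → ℝ) (hlam : ∀ j, 0 < lam j)
    (k0 : ℕ) (hk0 : 0 < k0) (mu : Fin k0 → ℝ) (hmu : ∀ j0, 0 < mu j0)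
    (t : ℝ) (ht : 0 ≤ t)
    (a : ℕ → ℝ) (ha0 : ∀ i, 0 ≤ a i) (ha1 : ∑' i : ℕ, a i = 1)
    (X : ℕ → Ω → ℕ) (Mhat : Ω → ℕ)
    (hXmeas : ∀ n, Measurable (X n)) (hMmeas : Measurable Mhat)
    (hXdist : ∀ n : ℕ, ∀ i : ℕ, P {ω | X n ω = i} = ENNReal.ofReal (a i))
    (hMdist : ∀ m : ℕ, P {ω | Mhat ω = m} = ENNReal.ofReal (igcpPmf k lam k0 mu m t))
    (hindep : iIndepFun
      (fun o : Option ℕ => o.elim Mhat X) P)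
    (u : ℝ) (hu : |u| ≤ 1) :
    ∫ ω, u ^ (∑ n ∈ Finset.range (Mhat ω), X n ω) ∂P =
      Real.exp (-(t * ∑ j0 : Fin k0, mu j0 *
        (1 - Real.exp (-(((j0 : ℕ) + 1 : ℝ) *
          ∑ j : Fin k, lam j *
            ∑' i : ℕ, pmfConv a ((j : ℕ) + 1) (i + 1) * (1 - u ^ (i + 1))))))) := by
  classical
  have hpow1 : ∀ j : ℕ, |u ^ j| ≤ 1 := fun j => by
    rw [abs_pow]; exact pow_le_one₀ (abs_nonneg u) hu
  have hSa : Summable a := by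
    by_contra hc
    rw [tsum_eq_zero_of_not_summable hc] at ha1
    norm_num at ha1
  have hau_le : ∀ i, |a i * u ^ i| ≤ a i := by
    intro i
    rw [abs_mul, abs_of_nonneg (ha0 i)]
    calc a i * |u ^ i| ≤ a i * 1 := mul_le_mul_of_nonneg_left (hpow1 i) (ha0 i)
      _ = a i := mul_one _
  have hgsum : Summable fun i => a i * u ^ i :=
    Summable.of_abs (Summable.of_nonneg_of_le (fun i => abs_nonneg _) hau_le hSa)
  have hgle : |∑' i, a i * u ^ i| ≤ 1 := by
    calc |∑' i, a i * u ^ i| ≤ ∑' i, |a i * u ^ i| :=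
          norm_tsum_le_tsum_norm (hgsum.abs.congr fun i => (Real.norm_eq_abs _).symm)
      _ ≤ ∑' i, a i := Summable.tsum_le_tsum hau_le (hgsum.abs) hSa
      _ = 1 := ha1
  have hignn : ∀ m, 0 ≤ igcpPmf k lam k0 mu m t := fun m =>
    tsum_nonneg fun s => mul_nonneg (gcpPmf_nonneg hlam m (Nat.cast_nonneg s))
      (gcpPmf_nonneg hmu s ht)
  have hA : ∀ m : ℕ, MeasurableSet {ω | Mhat ω = m} :=
    fun m => hMmeas (measurableSet_singleton m)
  set F : ℕ → Ω → ℝ := fun m =>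
    Set.indicator {ω' | Mhat ω' = m} (fun ω' => u ^ (∑ n ∈ Finset.range m, X n ω')) with hFdef
  have hpt : ∀ ω, u ^ (∑ n ∈ Finset.range (Mhat ω), X n ω) = ∑' m, F m ω := by
    intro ω
    have h1 : ∑' m, F m ω = F (Mhat ω) ω :=
      tsum_eq_single (Mhat ω) fun m hm =>
        Set.indicator_of_notMem (show ω ∉ {ω' | Mhat ω' = m} from fun h => hm h.symm) _
    have h2 : F (Mhat ω) ω = u ^ (∑ n ∈ Finset.range (Mhat ω), X n ω) :=
      Set.indicator_of_mem (show ω ∈ {ω' | Mhat ω' = Mhat ω} from rfl) _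
    rw [h1, h2]
  have hfmeas : ∀ m, Measurable (F m) := fun m =>
    ((measurable_of_countable fun j : ℕ => u ^ j).comp
      (Finset.measurable_sum _ fun n _ => hXmeas n)).indicator (hA m)
  have hpart : (∑' m, P {ω | Mhat ω = m}) = 1 := by
    have hdisj : Pairwise (Function.onFun Disjoint fun m => {ω | Mhat ω = m}) := by
      intro i j hij
      refine Set.disjoint_left.2 fun ω h1 h2 => hij ?_
      exact h1.symm.trans h2
    rw [← measure_iUnion hdisj hA]
    have huniv : (⋃ m, {ω | Mhat ω = m}) = Set.univ :=
      Set.eq_univ_iff_forall.2 fun ω => Set.mem_iUnion.2 ⟨Mhat ω, rfl⟩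
    rw [huniv, measure_univ]
  have hbnd : ∀ m, ∫⁻ ω, ‖F m ω‖₊ ∂P ≤ P {ω | Mhat ω = m} := by
    intro m
    have hle : ∀ ω, (‖F m ω‖₊ : ENNReal) ≤ {ω' | Mhat ω' = m}.indicator (fun _ => 1) ω := by
      intro ω
      by_cases hω : ω ∈ {ω' | Mhat ω' = m}
      · rw [Set.indicator_of_mem hω]
        have h3 : F m ω = u ^ (∑ n ∈ Finset.range m, X n ω) := Set.indicator_of_mem hω _
        rw [h3]
        have h4 : ‖u ^ (∑ n ∈ Finset.range m, X n ω)‖₊ ≤ 1 := by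
          rw [← NNReal.coe_le_coe]
          simpa [Real.norm_eq_abs] using hpow1 (∑ n ∈ Finset.range m, X n ω)
        exact_mod_cast h4
      · rw [Set.indicator_of_notMem hω]
        have h3 : F m ω = 0 := Set.indicator_of_notMem hω _
        simp [h3]
    calc ∫⁻ ω, ‖F m ω‖₊ ∂P
        ≤ ∫⁻ ω, {ω' | Mhat ω' = m}.indicator (fun _ => 1) ω ∂P := lintegral_mono hle
      _ = 1 * P {ω | Mhat ω = m} := lintegral_indicator_const (hA m) 1
      _ = P {ω | Mhat ω = m} := one_mul _
  have hswap : ∫ ω, (∑' m, F m ω) ∂P = ∑' m, ∫ ω, F m ω ∂P := by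
    refine integral_tsum (fun m => (hfmeas m).aestronglyMeasurable) ?_
    refine ne_of_lt (lt_of_le_of_lt (ENNReal.tsum_le_tsum hbnd) ?_)
    rw [hpart]
    exact ENNReal.one_lt_top
  have hFint : ∀ m, ∫ ω, F m ω ∂P
      = igcpPmf k lam k0 mu m t * (∑' i, a i * u ^ i) ^ m := by
    intro m
    rw [hFdef]
    rw [integral_F P X Mhat hXmeas hMmeas hindep a ha0 hXdist u hu m]
    rw [hMdist m, ENNReal.toReal_ofReal (hignn m)]
  calc ∫ ω, u ^ (∑ n ∈ Finset.range (Mhat ω), X n ω) ∂P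
      = ∫ ω, (∑' m, F m ω) ∂P := integral_congr_ae (ae_of_all _ hpt)
    _ = ∑' m, ∫ ω, F m ω ∂P := hswap
    _ = ∑' m, igcpPmf k lam k0 mu m t * (∑' i, a i * u ^ i) ^ m := tsum_congr hFint
    _ = Real.exp (t * ∑ j0 : Fin k0, mu j0 *
          (Real.exp (∑ j : Fin k, lam j * ((∑' i, a i * u ^ i) ^ ((j : ℕ) + 1) - 1))
            ^ ((j0 : ℕ) + 1) - 1)) := igcp_pgf hlam hmu ht hgle
    _ = Real.exp (-(t * ∑ j0 : Fin k0, mu j0 *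
        (1 - Real.exp (-(((j0 : ℕ) + 1 : ℝ) *
          ∑ j : Fin k, lam j *
            ∑' i : ℕ, pmfConv a ((j : ℕ) + 1) (i + 1) * (1 - u ^ (i + 1))))))) := by
        have hT : ∀ j : Fin k, (∑' i : ℕ, pmfConv a ((j : ℕ) + 1) (i + 1) * (1 - u ^ (i + 1)))
            = 1 - (∑' i, a i * u ^ i) ^ ((j : ℕ) + 1) := fun j => conv_tail ha0 ha1 _ hu
        have hE : ∀ j0 : Fin k0,
            Real.exp (-(((j0 : ℕ) + 1 : ℝ) * ∑ j : Fin k, lam j *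
              (1 - (∑' i, a i * u ^ i) ^ ((j : ℕ) + 1))))
            = Real.exp (∑ j : Fin k, lam j * ((∑' i, a i * u ^ i) ^ ((j : ℕ) + 1) - 1))
              ^ ((j0 : ℕ) + 1) := by
          intro j0
          rw [← Real.exp_nat_mul]
          congr 1
          push_cast
          rw [show (∑ j : Fin k, lam j * (1 - (∑' i, a i * u ^ i) ^ ((j : ℕ) + 1)))
              = -∑ j : Fin k, lam j * ((∑' i, a i * u ^ i) ^ ((j : ℕ) + 1) - 1) from by
            rw [← Finset.sum_neg_distrib]
            exact Finset.sum_congr rfl fun j _ => by ring]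
          ring
        simp only [hT, hE]
        congr 1
        rw [show (∑ j0 : Fin k0, mu j0 * (1 - Real.exp (∑ j : Fin k, lam j *
              ((∑' i, a i * u ^ i) ^ ((j : ℕ) + 1) - 1)) ^ ((j0 : ℕ) + 1)))
            = -∑ j0 : Fin k0, mu j0 * (Real.exp (∑ j : Fin k, lam j *
              ((∑' i, a i * u ^ i) ^ ((j : ℕ) + 1) - 1)) ^ ((j0 : ℕ) + 1) - 1) from by
          rw [← Finset.sum_neg_distrib]
          exact Finset.sum_congr rfl fun j0 _ => by ring]
        rw [mul_neg, neg_neg]
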